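/- Let n ≥ 5 and let a league outcome with n teams be tied with common score p. If p ≤ 3n−4, then for every team A, (n−1)·p − P̄(A) ≤ 3(n−1)(n−2) − 3. -/

import Mathlib

open Finset

inductive MatchResult : Type
  | homeWin : MatchResult
  | draw : MatchResult
  | awayWin : MatchResult
  deriving DecidableEq

instance instFintypeMatchResult : Fintype MatchResult :=
  ⟨{.homeWin, .draw, .awayWin}, fun x => by cases x <;> decide⟩

/-- A league outcome: a result for each ordered pair of distinct teams
(the first component is the home team). -/
abbrev LeagueOutcome (n : ℕ) : Type :=
  {p : Fin n × Fin n // p.1 ≠ p.2} → MatchResult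

/-- Points earned by the home team. -/
def homePts : MatchResult → ℕ
  | .homeWin => 3
  | .draw => 1
  | .awayWin => 0

/-- Points earned by the away team. -/
def awayPts : MatchResult → ℕ
  | .homeWin => 0
  | .draw => 1
  | .awayWin => 3

/-- Total points of team `i`: sum over all matches of the points `i` earns in them. -/
def totalPoints {n : ℕ} (r : LeagueOutcome n) (i : Fin n) : ℕ :=
  ∑ m : {p : Fin n × Fin n // p.1 ≠ p.2},
    ((if m.val.1 = i then homePts (r m) else 0) +
     (if m.val.2 = i then awayPts (r m) else 0))

/-- Total points the other teams earn in their matches against team `i`. -/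
def oppPoints {n : ℕ} (r : LeagueOutcome n) (i : Fin n) : ℕ :=
  ∑ m : {p : Fin n × Fin n // p.1 ≠ p.2},
    ((if m.val.1 = i then awayPts (r m) else 0) +
     (if m.val.2 = i then homePts (r m) else 0))

/-- Number of matches that team `i` wins. -/
def wins {n : ℕ} (r : LeagueOutcome n) (i : Fin n) : ℕ :=
  (Finset.univ.filter (fun m : {p : Fin n × Fin n // p.1 ≠ p.2} =>
    (m.val.1 = i ∧ r m = .homeWin) ∨ (m.val.2 = i ∧ r m = .awayWin))).card

/-- Number of matches that team `i` draws. -/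
def draws {n : ℕ} (r : LeagueOutcome n) (i : Fin n) : ℕ :=
  (Finset.univ.filter (fun m : {p : Fin n × Fin n // p.1 ≠ p.2} =>
    (m.val.1 = i ∨ m.val.2 = i) ∧ r m = .draw)).card

/-- Number of matches that team `i` loses. -/
def losses {n : ℕ} (r : LeagueOutcome n) (i : Fin n) : ℕ :=
  (Finset.univ.filter (fun m : {p : Fin n × Fin n // p.1 ≠ p.2} =>
    (m.val.1 = i ∧ r m = .awayWin) ∨ (m.val.2 = i ∧ r m = .homeWin))).card

abbrev MT (n : ℕ) := {p : Fin n × Fin n // p.1 ≠ p.2}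

lemma cardHome {n : ℕ} (i : Fin n) :
    (univ.filter fun m : MT n => m.val.1 = i).card = n - 1 := by
  rw [show n - 1 = (univ.erase i).card by simp]
  apply Finset.card_bij' (fun m _ => m.val.2) (fun j hj => ⟨(i, j), by aesop⟩)
  · intro m hm; simp at hm; exact Subtype.ext (Prod.ext hm.symm rfl)
  · intro j hj; simp
  · intro m hm
    simp at hm ⊢
    rw [← hm]; exact fun hh => m.prop hh.symm
  · intro j hj; simp

lemma cardAway {n : ℕ} (i : Fin n) :
    (univ.filter fun m : MT n => m.val.2 = i).card = n - 1 := by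
  rw [show n - 1 = (univ.erase i).card by simp]
  apply Finset.card_bij' (fun m _ => m.val.1) (fun j hj => ⟨(j, i), by aesop⟩)
  · intro m hm; simp at hm; exact Subtype.ext (Prod.ext rfl hm.symm)
  · intro j hj; simp
  · intro m hm
    simp at hm ⊢
    rw [← hm]; exact m.prop
  · intro j hj; simp

lemma cardInvolving {n : ℕ} (i : Fin n) :
    (univ.filter fun m : MT n => m.val.1 = i ∨ m.val.2 = i).card = 2 * (n - 1) := by
  rw [Finset.filter_or, Finset.card_union_of_disjoint, cardHome, cardAway]
  · ring
  · rw [Finset.disjoint_left]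
    intro m h1 h2
    simp at h1 h2
    exact m.prop (h1.trans h2.symm)

/-- Total number of drawn matches. -/
def totalDraws {n : ℕ} (r : LeagueOutcome n) : ℕ :=
  (univ.filter fun m : MT n => r m = .draw).card

lemma total_eq {n : ℕ} (r : LeagueOutcome n) (i : Fin n) :
    totalPoints r i = 3 * wins r i + draws r i := by
  unfold totalPoints wins draws
  rw [Finset.card_filter, Finset.card_filter, Finset.mul_sum, ← Finset.sum_add_distrib]
  refine Finset.sum_congr rfl fun m _ => ?_
  have hne := m.prop
  by_cases h1 : m.val.1 = i <;> by_cases h2 : m.val.2 = i <;>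
    cases hr : r m <;> simp_all [homePts, awayPts]

lemma opp_eq {n : ℕ} (r : LeagueOutcome n) (i : Fin n) :
    oppPoints r i = 3 * losses r i + draws r i := by
  unfold oppPoints losses draws
  rw [Finset.card_filter, Finset.card_filter, Finset.mul_sum, ← Finset.sum_add_distrib]
  refine Finset.sum_congr rfl fun m _ => ?_
  have hne := m.prop
  by_cases h1 : m.val.1 = i <;> by_cases h2 : m.val.2 = i <;>
    cases hr : r m <;> simp_all [homePts, awayPts]

lemma wdl_eq {n : ℕ} (r : LeagueOutcome n) (i : Fin n) :
    wins r i + draws r i + losses r i = 2 * (n - 1) := by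
  unfold wins draws losses
  rw [Finset.card_filter, Finset.card_filter, Finset.card_filter,
    ← Finset.sum_add_distrib, ← Finset.sum_add_distrib, ← cardInvolving i,
    Finset.card_filter]
  refine Finset.sum_congr rfl fun m _ => ?_
  have hne := m.prop
  by_cases h1 : m.val.1 = i <;> by_cases h2 : m.val.2 = i <;>
    cases hr : r m <;> simp_all

lemma match_balance {n : ℕ} (r : LeagueOutcome n) (i : Fin n) :
    totalPoints r i + oppPoints r i + draws r i = 3 * (2 * (n - 1)) := by
  unfold totalPoints oppPoints draws
  rw [Finset.card_filter, ← Finset.sum_add_distrib, ← Finset.sum_add_distrib,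
    ← cardInvolving i, Finset.card_filter, Finset.mul_sum]
  refine Finset.sum_congr rfl fun m _ => ?_
  have hne := m.prop
  by_cases h1 : m.val.1 = i <;> by_cases h2 : m.val.2 = i <;>
    cases hr : r m <;> simp_all [homePts, awayPts]

lemma card_MT (n : ℕ) : Fintype.card (MT n) = n * n - n := by
  rw [Fintype.card_subtype]
  have : (univ.filter fun q : Fin n × Fin n => q.1 ≠ q.2) = (univ : Finset (Fin n)).offDiag := by
    ext q; simp [Finset.mem_offDiag]
  rw [this, Finset.offDiag_card]
  simp

lemma sum_total {n : ℕ} (r : LeagueOutcome n) :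
    (∑ i, totalPoints r i) + totalDraws r = 3 * (n * n - n) := by
  unfold totalPoints totalDraws
  rw [Finset.sum_comm, Finset.card_filter, ← Finset.sum_add_distrib, ← card_MT n,
    ← Finset.card_univ, Finset.card_eq_sum_ones, Finset.mul_sum]
  refine Finset.sum_congr rfl fun m _ => ?_
  rw [Finset.sum_add_distrib, Finset.sum_ite_eq, Finset.sum_ite_eq]
  cases hr : r m <;> simp [homePts, awayPts]

lemma sum_draws {n : ℕ} (r : LeagueOutcome n) :
    (∑ i, draws r i) = 2 * totalDraws r := by
  unfold draws totalDraws
  simp only [Finset.card_filter]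
  rw [Finset.sum_comm, Finset.mul_sum]
  refine Finset.sum_congr rfl fun m _ => ?_
  have hne := m.prop
  by_cases hd : r m = .draw
  · simp only [hd, and_true]
    rw [show (fun i => if (m.val.1 = i ∨ m.val.2 = i) then (1:ℕ) else 0) =
      (fun i => (if m.val.1 = i then (1:ℕ) else 0) + (if m.val.2 = i then 1 else 0)) from ?_]
    · rw [Finset.sum_add_distrib, Finset.sum_ite_eq, Finset.sum_ite_eq]; simp
    · funext i
      by_cases h1 : m.val.1 = i <;> by_cases h2 : m.val.2 = i <;> simp_all
  · simp [hd]
set_option maxHeartbeats 1000000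

/-- for `n ≥ 5`, in a league tied with common score `p ≤ 3n−4`,
`(n−1)·p − P̄(A) ≤ 3(n−1)(n−2) − 3` for every team `A`. -/
theorem tied_second_constraint (n : ℕ) (hn : 5 ≤ n) (r : LeagueOutcome n) (p : ℕ)
    (h : ∀ i, totalPoints r i = p) (hp : p ≤ 3 * n - 4) :
    ∀ A : Fin n,
      ((n : ℤ) - 1) * (p : ℤ) - (oppPoints r A : ℤ) ≤
        3 * ((n : ℤ) - 1) * ((n : ℤ) - 2) - 3 := by
  obtain ⟨m, rfl⟩ : ∃ m, n = m + 5 := ⟨n - 5, by omega⟩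
  intro A
  have e1 : m + 5 - 1 = m + 4 := by omega
  have e2 : (m + 5) * (m + 5) - (m + 5) = (m + 5) * (m + 4) := by
    have : (m + 5) * (m + 5) = (m + 5) * (m + 4) + (m + 5) := by ring
    omega
  -- global draw count
  have hF4 := sum_total r
  rw [e2] at hF4
  have hsum : (∑ i, totalPoints r i) = (m + 5) * p := by
    rw [Finset.sum_congr rfl fun i _ => h i]
    simp [Finset.card_univ, mul_comm]
  rw [hsum] at hF4
  set d := totalDraws r with hdd
  set DA := draws r A with hDAd
  have hbal := match_balance r A
  rw [h A, e1] at hbal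
  have hwdlA := wdl_eq r A
  rw [e1] at hwdlA
  have htotA := total_eq r A
  rw [h A] at htotA
  -- p + k = 3 * (m + 4) with k ≥ 1
  have hk1 : p + 1 ≤ 3 * (m + 4) := by omega
  set k : ℕ := 3 * (m + 4) - p with hkd
  have hpk : p + k = 3 * (m + 4) := by omega
  have hdk : d = (m + 5) * k := by
    have h2 : (m + 5) * p + (m + 5) * k = 3 * ((m + 5) * (m + 4)) := by
      rw [← Nat.mul_add, hpk]; ring
    linarith [hF4, h2]
  have key : DA + 3 ≤ d := by
    rcases show k = 1 ∨ k = 2 ∨ 3 ≤ k by omega with hk | hk | hk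
    · -- p = 3m + 11 : every team has exactly 2 draws
      have hd1 : d = m + 5 := by rw [hdk, hk, mul_one]
      have hsd := sum_draws r
      have hlow : ∀ i ∈ (univ : Finset (Fin (m + 5))).erase A, 2 ≤ draws r i := by
        intro i _
        have ht := total_eq r i
        rw [h i] at ht
        omega
      have h3 : ((univ : Finset (Fin (m + 5))).erase A).card • 2 ≤
          ∑ i ∈ (univ : Finset (Fin (m + 5))).erase A, draws r i :=
        Finset.card_nsmul_le_sum _ _ _ hlow
      have h4 : draws r A + ∑ i ∈ (univ : Finset (Fin (m + 5))).erase A, draws r i =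
          ∑ i, draws r i := Finset.add_sum_erase _ (draws r) (Finset.mem_univ A)
      have h5 : ((univ : Finset (Fin (m + 5))).erase A).card = m + 4 := by
        simp [Finset.card_erase_of_mem]
      rw [h5] at h3
      simp only [smul_eq_mul] at h3
      rw [← hDAd] at h4
      omega
    · have hd2 : d = 2 * (m + 5) := by rw [hdk, hk]; ring
      omega
    · have h6 : (m + 5) * 3 ≤ (m + 5) * k := Nat.mul_le_mul_left _ hk
      rw [← hdk] at h6
      omega
  have hbalZ : (p : ℤ) + (oppPoints r A : ℤ) + (DA : ℤ) = 3 * (2 * ((m : ℤ) + 4)) := by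
    exact_mod_cast congrArg (Nat.cast : ℕ → ℤ) hbal
  have hF4Z : ((m : ℤ) + 5) * p + (d : ℤ) = 3 * (((m : ℤ) + 5) * ((m : ℤ) + 4)) := by
    exact_mod_cast congrArg (Nat.cast : ℕ → ℤ) hF4
  have keyZ : (DA : ℤ) + 3 ≤ (d : ℤ) := by exact_mod_cast key
  push_cast
  nlinarith [hbalZ, hF4Z, keyZ]
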